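/- The directional delta method: let T_n be random variables in ℝ^d with √n·(T_n − θ) converging in distribution to a random variable Z, and let g: ℝ^d → ℝ be Lipschitz and Hadamard directionally differentiable at θ with continuous directional derivative g'_θ. Then √n·(g(T_n) − g(θ)) converges in distribution to g'_θ(Z). -/

import Mathlib

open Filter Topology MeasureTheory

section DeltaAux
open Metric


private lemma sqrt_tendsto_atTop : Tendsto Real.sqrt atTop atTop :=
  tendsto_atTop_atTop_of_monotone (fun _ _ h => Real.sqrt_le_sqrt h)
    (fun b => ⟨(max b 0)^2, by rw [Real.sqrt_sq (le_max_right b 0)]; exact le_max_left _ _⟩)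

/-- pointwise limit -/
private lemma aux_ptwise {d : ℕ} (θ : Fin d → ℝ) (g g' : (Fin d → ℝ) → ℝ)
    (hHadamard : ∀ (h : Fin d → ℝ) (t : ℕ → ℝ) (hn : ℕ → (Fin d → ℝ)),
      (∀ n, 0 < t n) → Tendsto t atTop (𝓝 0) → Tendsto hn atTop (𝓝 h) →
      Tendsto (fun n => (g (θ + t n • hn n) - g θ) / t n) atTop (𝓝 (g' h)))
    (x : Fin d → ℝ) :
    Tendsto (fun n : ℕ => Real.sqrt (n+1) * (g (θ + (Real.sqrt (n+1))⁻¹ • x) - g θ))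
      atTop (𝓝 (g' x)) := by
  have h1 : ∀ n : ℕ, (0:ℝ) < (Real.sqrt (n+1))⁻¹ := by
    intro n
    have : (0:ℝ) < Real.sqrt (n+1) := Real.sqrt_pos.2 (by positivity)
    positivity
  have h2 : Tendsto (fun n : ℕ => (Real.sqrt (n+1))⁻¹) atTop (𝓝 0) := by
    apply Tendsto.inv_tendsto_atTop
    apply sqrt_tendsto_atTop.comp
    apply tendsto_atTop_add_const_right
    exact tendsto_natCast_atTop_atTop
  have := hHadamard x (fun n => (Real.sqrt (n+1))⁻¹) (fun _ => x) h1 h2 tendsto_const_nhds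
  convert this using 2 with n
  simp only [div_eq_mul_inv, inv_inv, mul_comm]


/-- bound on the difference quotient -/
private lemma aux_bound {d : ℕ} (θ : Fin d → ℝ) (g : (Fin d → ℝ) → ℝ) (Kg : NNReal)
    (hLip : LipschitzWith Kg g) (n : ℕ) (x : Fin d → ℝ) :
    |Real.sqrt n * (g (θ + (Real.sqrt n)⁻¹ • x) - g θ)| ≤ Kg * ‖x‖ := by
  rcases Nat.eq_zero_or_pos n with rfl | hn
  · simp; positivity
  · have hs : (0:ℝ) < Real.sqrt n := Real.sqrt_pos.2 (by positivity)
    have h1 : |g (θ + (Real.sqrt n)⁻¹ • x) - g θ| ≤ Kg * ((Real.sqrt n)⁻¹ * ‖x‖) := by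
      have := hLip.dist_le_mul (θ + (Real.sqrt n)⁻¹ • x) θ
      rw [dist_eq_norm, dist_eq_norm] at this
      simpa [norm_smul, abs_of_pos hs] using this
    calc |Real.sqrt n * (g (θ + (Real.sqrt n)⁻¹ • x) - g θ)|
        = Real.sqrt n * |g (θ + (Real.sqrt n)⁻¹ • x) - g θ| := by
          rw [abs_mul, abs_of_pos hs]
      _ ≤ Real.sqrt n * (Kg * ((Real.sqrt n)⁻¹ * ‖x‖)) := by
          exact mul_le_mul_of_nonneg_left h1 hs.le
      _ = (Real.sqrt n * (Real.sqrt n)⁻¹) * (Kg * ‖x‖) := by ring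
      _ = Kg * ‖x‖ := by rw [mul_inv_cancel₀ hs.ne', one_mul]


private lemma aux_unif {d : ℕ} (θ : Fin d → ℝ) (g g' : (Fin d → ℝ) → ℝ)
    (hg'cont : Continuous g')
    (hHadamard : ∀ (h : Fin d → ℝ) (t : ℕ → ℝ) (hn : ℕ → (Fin d → ℝ)),
      (∀ n, 0 < t n) → Tendsto t atTop (𝓝 0) → Tendsto hn atTop (𝓝 h) →
      Tendsto (fun n => (g (θ + t n • hn n) - g θ) / t n) atTop (𝓝 (g' h)))
    (B : ℝ) (ε : ℝ) (hε : 0 < ε) :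
    ∀ᶠ n : ℕ in atTop, ∀ x ∈ closedBall (0 : Fin d → ℝ) B,
      |Real.sqrt n * (g (θ + (Real.sqrt n)⁻¹ • x) - g θ) - g' x| < ε := by
  by_contra hcon
  rw [Filter.not_eventually] at hcon
  have hcon' : ∃ᶠ n : ℕ in atTop, (1 ≤ n ∧
      ∃ x ∈ closedBall (0 : Fin d → ℝ) B,
        ε ≤ |Real.sqrt n * (g (θ + (Real.sqrt n)⁻¹ • x) - g θ) - g' x|) := by
    apply ((eventually_ge_atTop 1).and_frequently hcon).mono
    rintro n ⟨h1, h2⟩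
    push_neg at h2
    exact ⟨h1, h2⟩
  obtain ⟨m, hm_mono, hm⟩ := Filter.extraction_of_frequently_atTop hcon'
  choose x hx_mem hx_far using fun k => (hm k).2
  have hm1 : ∀ k, 1 ≤ m k := fun k => (hm k).1
  obtain ⟨a, -, ψ, hψ_mono, hψ_tend⟩ :=
    (isCompact_closedBall (0 : Fin d → ℝ) B).tendsto_subseq hx_mem
  set t : ℕ → ℝ := fun k => (Real.sqrt (m (ψ k)))⁻¹ with ht_def
  have hsq : ∀ k, (0:ℝ) < Real.sqrt (m (ψ k)) := by
    intro k
    have := hm1 (ψ k)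
    exact Real.sqrt_pos.2 (by exact_mod_cast Nat.lt_of_lt_of_le Nat.zero_lt_one this)
  have ht_pos : ∀ k, 0 < t k := fun k => inv_pos.2 (hsq k)
  have ht0 : Tendsto t atTop (𝓝 0) := by
    apply Tendsto.inv_tendsto_atTop
    apply (tendsto_atTop_atTop_of_monotone (fun _ _ h => Real.sqrt_le_sqrt h)
      (fun b => ⟨(max b 0)^2, by rw [Real.sqrt_sq (le_max_right b 0)]; exact le_max_left _ _⟩)).comp
    exact (tendsto_natCast_atTop_atTop (R := ℝ)).comp
      ((hm_mono.comp hψ_mono).tendsto_atTop)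
  have hmain := hHadamard a t (fun k => x (ψ k)) ht_pos ht0 hψ_tend
  have hmain' : Tendsto (fun k => Real.sqrt (m (ψ k)) *
      (g (θ + (Real.sqrt (m (ψ k)))⁻¹ • x (ψ k)) - g θ)) atTop (𝓝 (g' a)) := by
    convert hmain using 2 with k
    simp only [ht_def, div_eq_mul_inv, inv_inv, mul_comm]
  have hg'lim : Tendsto (fun k => g' (x (ψ k))) atTop (𝓝 (g' a)) :=
    (hg'cont.tendsto a).comp hψ_tend
  have hdiff : Tendsto (fun k => |Real.sqrt (m (ψ k)) *
      (g (θ + (Real.sqrt (m (ψ k)))⁻¹ • x (ψ k)) - g θ) - g' (x (ψ k))|) atTop (𝓝 0) := by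
    have := (hmain'.sub hg'lim)
    rw [sub_self] at this
    simpa using this.abs
  have : ε ≤ 0 := ge_of_tendsto hdiff (Eventually.of_forall fun k => hx_far (ψ k))
  linarith


private noncomputable def bumpBCF (d : ℕ) (R : ℝ) : BoundedContinuousFunction (Fin d → ℝ) ℝ :=
  BoundedContinuousFunction.mkOfBound
    ⟨fun x => min 1 (max (‖x‖ - R) 0), by
      exact (continuous_const.min ((continuous_norm.sub continuous_const).max continuous_const))⟩
    1
    (by
      intro x y
      have h1 : ∀ z : Fin d → ℝ, (0:ℝ) ≤ min 1 (max (‖z‖ - R) 0) :=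
        fun z => le_min zero_le_one (le_max_right _ _)
      have h2 : ∀ z : Fin d → ℝ, min 1 (max (‖z‖ - R) 0) ≤ 1 := fun z => min_le_left _ _
      rw [Real.dist_eq]
      simp only [ContinuousMap.coe_mk]
      rw [abs_sub_le_iff]
      constructor <;> [linarith [h1 y, h2 x]; linarith [h1 x, h2 y]])

private lemma bumpBCF_nonneg (d : ℕ) (R : ℝ) (x : Fin d → ℝ) : 0 ≤ bumpBCF d R x :=
  le_min zero_le_one (le_max_right _ _)

private lemma bumpBCF_eq_one (d : ℕ) (R : ℝ) (x : Fin d → ℝ) (hx : R + 1 < ‖x‖) :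
    bumpBCF d R x = 1 := by
  have : (1:ℝ) ≤ max (‖x‖ - R) 0 := le_max_of_le_left (by linarith)
  exact min_eq_left this

private lemma bumpBCF_le_indicator (d : ℕ) (R : ℝ) (x : Fin d → ℝ) :
    bumpBCF d R x ≤ Set.indicator {y : Fin d → ℝ | R < ‖y‖} (fun _ => (1:ℝ)) x := by
  by_cases hx : R < ‖x‖
  · rw [Set.indicator_of_mem (show x ∈ {y : Fin d → ℝ | R < ‖y‖} from hx)]
    exact min_le_left _ _
  · rw [Set.indicator_of_notMem (show x ∉ {y : Fin d → ℝ | R < ‖y‖} from hx)]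
    push_neg at hx
    have : max (‖x‖ - R) 0 = 0 := max_eq_right (by linarith)
    show min 1 (max (‖x‖ - R) 0) ≤ 0
    rw [this]
    exact min_le_right _ _

end DeltaAux

/-- Convergence in distribution of a sequence of random variables, characterized via
integrals of bounded continuous test functions. -/
def ConvInDist {Ω E : Type*} [MeasurableSpace Ω] [TopologicalSpace E]
    (μ : Measure Ω) (X : ℕ → Ω → E) (Y : Ω → E) : Prop :=
  ∀ f : BoundedContinuousFunction E ℝ,
    Tendsto (fun n => ∫ ω, f (X n ω) ∂μ) atTop (𝓝 (∫ ω, f (Y ω) ∂μ))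

/-- The directional delta method: if `√n (T_n − θ)` converges in distribution to `Z`,
and `g : ℝ^d → ℝ` is Lipschitz and Hadamard directionally differentiable at `θ` with
continuous directional derivative `g'`, then `√n (g(T_n) − g(θ))` converges in
distribution to `g'(Z)`. -/
theorem directional_delta_method {d : ℕ} {Ω : Type*} [MeasurableSpace Ω]
    (μ : Measure Ω) [IsProbabilityMeasure μ]
    (T : ℕ → Ω → (Fin d → ℝ)) (Z : Ω → (Fin d → ℝ)) (θ : Fin d → ℝ)
    (g : (Fin d → ℝ) → ℝ) (g' : (Fin d → ℝ) → ℝ) (Kg : NNReal)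
    (hmeas : ∀ n, Measurable (T n)) (hZmeas : Measurable Z)
    (hLip : LipschitzWith Kg g)
    (hg'cont : Continuous g')
    (hHadamard : ∀ (h : Fin d → ℝ) (t : ℕ → ℝ) (hn : ℕ → (Fin d → ℝ)),
      (∀ n, 0 < t n) → Tendsto t atTop (𝓝 0) → Tendsto hn atTop (𝓝 h) →
      Tendsto (fun n => (g (θ + t n • hn n) - g θ) / t n) atTop (𝓝 (g' h)))
    (hconv : ConvInDist μ (fun n ω => Real.sqrt n • (T n ω - θ)) Z) :
    ConvInDist μ (fun n ω => Real.sqrt n * (g (T n ω) - g θ)) (fun ω => g' (Z ω)) := by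
  intro f
  -- notation
  set X : ℕ → Ω → (Fin d → ℝ) := fun n ω => Real.sqrt n • (T n ω - θ) with hX_def
  have hXmeas : ∀ n, Measurable (X n) := by
    intro n
    have : X n = fun ω => Real.sqrt n • (T n ω - θ) := rfl
    rw [this]
    exact (continuous_const_smul (Real.sqrt n)).measurable.comp
      ((hmeas n).sub measurable_const)
  set φ : ℕ → (Fin d → ℝ) → ℝ :=
    fun n x => Real.sqrt n * (g (θ + (Real.sqrt n)⁻¹ • x) - g θ) with hφ_def
  have hφcont : ∀ n, Continuous (φ n) :=
    fun n => continuous_const.mul ((hLip.continuous.comp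
      (continuous_const.add (continuous_const_smul _))).sub continuous_const)
  have hrepr : ∀ (n : ℕ) (ω : Ω), Real.sqrt n * (g (T n ω) - g θ) = φ n (X n ω) := by
    intro n ω
    rcases Nat.eq_zero_or_pos n with rfl | hn
    · simp [hφ_def]
    · have hs : (0:ℝ) < Real.sqrt n := Real.sqrt_pos.2 (by positivity)
      simp only [hφ_def, hX_def, smul_smul, inv_mul_cancel₀ hs.ne', one_smul,
        add_sub_cancel]
  have hgoal_eq : (fun n : ℕ => ∫ ω, f (Real.sqrt n * (g (T n ω) - g θ)) ∂μ)
      = fun n => ∫ ω, f (φ n (X n ω)) ∂μ := by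
    funext n; congr 1; funext ω; rw [hrepr]
  rw [hgoal_eq]
  -- basic bounds
  have hφbound : ∀ (n : ℕ) (x : Fin d → ℝ), |φ n x| ≤ Kg * ‖x‖ := fun n x => aux_bound θ g Kg hLip n x
  have hg'bound : ∀ x : Fin d → ℝ, |g' x| ≤ Kg * ‖x‖ := by
    intro x
    have hpt := (aux_ptwise θ g g' hHadamard x).abs
    refine le_of_tendsto hpt (Eventually.of_forall fun n => ?_)
    have := aux_bound θ g Kg hLip (n + 1) x
    push_cast at this
    exact this
  -- integrability helpers
  have hIntf : ∀ (G : (Fin d → ℝ) → ℝ), Continuous G →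
      ∀ n, Integrable (fun ω => f (G (X n ω))) μ := by
    intro G hG n
    refine (integrable_const ‖f‖).mono'
      ((f.continuous.measurable.comp (hG.measurable.comp (hXmeas n))).aestronglyMeasurable)
      (ae_of_all _ fun ω => f.norm_coe_le_norm _)
  have hIntbump : ∀ (R : ℝ) n, Integrable (fun ω => bumpBCF d R (X n ω)) μ := by
    intro R n
    refine (integrable_const ‖bumpBCF d R‖).mono'
      (((bumpBCF d R).continuous.measurable.comp (hXmeas n)).aestronglyMeasurable)
      (ae_of_all _ fun ω => (bumpBCF d R).norm_coe_le_norm _)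
  -- the limit of the second term
  have hB : Tendsto (fun n => ∫ ω, f (g' (X n ω)) ∂μ) atTop (𝓝 (∫ ω, f (g' (Z ω)) ∂μ)) := by
    have := hconv (f.compContinuous ⟨g', hg'cont⟩)
    simpa only [BoundedContinuousFunction.coe_compContinuous, Function.comp_apply,
      ContinuousMap.coe_mk] using this
  -- main convergence, via ε
  rw [Metric.tendsto_atTop]
  intro ε hε
  set ε' : ℝ := ε / 8 with hε'_def
  have hε' : 0 < ε' := by positivity
  set εZ : ℝ := ε / (8 * (‖f‖ + 1)) with hεZ_def
  have hfnn : (0:ℝ) ≤ ‖f‖ := norm_nonneg f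
  have hεZ : 0 < εZ := by positivity
  -- choose R with small tail for Z
  obtain ⟨R, hR⟩ : ∃ R : ℕ, (μ {ω | (R:ℝ) < ‖Z ω‖}).toReal < εZ := by
    set s : ℕ → Set Ω := fun R => {ω | (R:ℝ) < ‖Z ω‖} with hs_def
    have hs_meas : ∀ R, MeasurableSet (s R) :=
      fun R => measurableSet_lt measurable_const hZmeas.norm
    have hs_anti : Antitone s := by
      intro a b hab ω hω
      exact lt_of_le_of_lt (show ((a:ℝ)) ≤ (b:ℝ) from Nat.cast_le.2 hab) hω
    have hs_empty : (⋂ R, s R) = ∅ := by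
      ext ω
      simp only [Set.mem_iInter, Set.mem_empty_iff_false, iff_false, not_forall, hs_def,
        Set.mem_setOf_eq, not_lt]
      obtain ⟨R, hR⟩ := exists_nat_ge ‖Z ω‖
      exact ⟨R, hR⟩
    have htend := MeasureTheory.tendsto_measure_iInter_atTop
      (fun R => (hs_meas R).nullMeasurableSet) hs_anti ⟨0, measure_ne_top μ _⟩
    rw [hs_empty, measure_empty] at htend
    have := htend.eventually_lt_const (ENNReal.ofReal_pos.2 hεZ)
    obtain ⟨R, hR⟩ := this.exists
    exact ⟨R, (ENNReal.lt_ofReal_iff_toReal_lt (measure_ne_top μ _)).1 hR⟩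
  set B : ℝ := (R:ℝ) + 1 with hB_def
  have hBpos : 0 < B := by positivity
  set M : ℝ := Kg * B with hM_def
  have hMnn : 0 ≤ M := by positivity
  -- ∫ bump(Z) ≤ tail measure
  have hbumpZ : ∫ ω, bumpBCF d R (Z ω) ∂μ ≤ (μ {ω | (R:ℝ) < ‖Z ω‖}).toReal := by
    have hind : Integrable
        (fun ω => Set.indicator {ω | (R:ℝ) < ‖Z ω‖} (fun _ => (1:ℝ)) ω) μ :=
      (integrable_const (1:ℝ)).indicator (measurableSet_lt measurable_const hZmeas.norm)
    have hintb : Integrable (fun ω => bumpBCF d R (Z ω)) μ :=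
      (integrable_const ‖bumpBCF d (R:ℝ)‖).mono'
        (((bumpBCF d R).continuous.measurable.comp hZmeas).aestronglyMeasurable)
        (ae_of_all _ fun ω => (bumpBCF d (R:ℝ)).norm_coe_le_norm _)
    have hmono : ∀ ω, bumpBCF d R (Z ω)
        ≤ Set.indicator {ω | (R:ℝ) < ‖Z ω‖} (fun _ => (1:ℝ)) ω := by
      intro ω
      have := bumpBCF_le_indicator d R (Z ω)
      by_cases hω : (R:ℝ) < ‖Z ω‖
      · rw [Set.indicator_of_mem (show ω ∈ {ω | (R:ℝ) < ‖Z ω‖} from hω)]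
        rw [Set.indicator_of_mem (show Z ω ∈ {y : Fin d → ℝ | (R:ℝ) < ‖y‖} from hω)] at this
        exact this
      · rw [Set.indicator_of_notMem (show ω ∉ {ω | (R:ℝ) < ‖Z ω‖} from hω)]
        rw [Set.indicator_of_notMem
          (show Z ω ∉ {y : Fin d → ℝ | (R:ℝ) < ‖y‖} from hω)] at this
        exact this
    calc ∫ ω, bumpBCF d R (Z ω) ∂μ
        ≤ ∫ ω, Set.indicator {ω | (R:ℝ) < ‖Z ω‖} (fun _ => (1:ℝ)) ω ∂μ :=
          integral_mono hintb hind hmono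
      _ = (μ {ω | (R:ℝ) < ‖Z ω‖}).toReal := by
          rw [MeasureTheory.integral_indicator_const (1:ℝ)
            (measurableSet_lt measurable_const hZmeas.norm), smul_eq_mul, mul_one]
          rfl
  -- uniform continuity of f on [-M, M]
  obtain ⟨δ, hδ, hδf⟩ := (Metric.uniformContinuousOn_iff.1
    ((isCompact_Icc (a := -M) (b := M)).uniformContinuousOn_of_continuous
      f.continuous.continuousOn)) ε' hε'
  -- three eventual facts
  have ev1 := aux_unif θ g g' hg'cont hHadamard B δ hδ
  have ev2 : ∀ᶠ n in atTop, ∫ ω, bumpBCF d R (X n ω) ∂μ < 2 * εZ := by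
    have := hconv (bumpBCF d R)
    exact this.eventually_lt_const (by linarith)
  have ev3 : ∀ᶠ n in atTop,
      dist (∫ ω, f (g' (X n ω)) ∂μ) (∫ ω, f (g' (Z ω)) ∂μ) < ε' :=
    (Metric.tendsto_nhds.1 hB) ε' hε'
  obtain ⟨N, hN⟩ := (ev1.and (ev2.and ev3)).exists_forall_of_atTop
  refine ⟨N, fun n hn => ?_⟩
  obtain ⟨h1, h2, h3⟩ := hN n hn
  -- pointwise bound for the first difference
  have hptw : ∀ ω, |f (φ n (X n ω)) - f (g' (X n ω))|
      ≤ ε' + (2 * ‖f‖) * bumpBCF d R (X n ω) := by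
    intro ω
    by_cases hx : ‖X n ω‖ ≤ B
    · have hmem : X n ω ∈ Metric.closedBall (0 : Fin d → ℝ) B := by
        rw [Metric.mem_closedBall, dist_zero_right]; exact hx
      have hδx := h1 (X n ω) hmem
      have ha : φ n (X n ω) ∈ Set.Icc (-M) M := by
        have := hφbound n (X n ω)
        have h2' : (Kg:ℝ) * ‖X n ω‖ ≤ M := by
          rw [hM_def]
          exact mul_le_mul_of_nonneg_left hx Kg.coe_nonneg
        rw [Set.mem_Icc, ← abs_le]
        exact this.trans h2'
      have hb : g' (X n ω) ∈ Set.Icc (-M) M := by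
        have := hg'bound (X n ω)
        have h2' : (Kg:ℝ) * ‖X n ω‖ ≤ M := by
          rw [hM_def]
          exact mul_le_mul_of_nonneg_left hx Kg.coe_nonneg
        rw [Set.mem_Icc, ← abs_le]
        exact this.trans h2'
      have := hδf _ ha _ hb (by rw [Real.dist_eq]; exact hδx)
      rw [Real.dist_eq] at this
      have hnn : 0 ≤ (2 * ‖f‖) * bumpBCF d R (X n ω) :=
        mul_nonneg (by positivity) (bumpBCF_nonneg d R _)
      linarith
    · push_neg at hx
      have h1' : bumpBCF d R (X n ω) = 1 := bumpBCF_eq_one d R _ (by rw [hB_def] at hx; exact hx)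
      rw [h1', mul_one]
      calc |f (φ n (X n ω)) - f (g' (X n ω))|
          ≤ |f (φ n (X n ω))| + |f (g' (X n ω))| := abs_sub _ _
        _ ≤ ‖f‖ + ‖f‖ := add_le_add (f.norm_coe_le_norm _) (f.norm_coe_le_norm _)
        _ ≤ ε' + 2 * ‖f‖ := by linarith
  -- integrate the bound
  have hAB : |(∫ ω, f (φ n (X n ω)) ∂μ) - ∫ ω, f (g' (X n ω)) ∂μ|
      ≤ ε' + (2 * ‖f‖) * (2 * εZ) := by
    have hint1 := hIntf (φ n) (hφcont n) n
    have hint2 := hIntf g' hg'cont n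
    have hintb := hIntbump R n
    have hintRHS : Integrable (fun ω => ε' + (2 * ‖f‖) * bumpBCF d R (X n ω)) μ :=
      (integrable_const ε').add (hintb.const_mul _)
    calc |(∫ ω, f (φ n (X n ω)) ∂μ) - ∫ ω, f (g' (X n ω)) ∂μ|
        = |∫ ω, (f (φ n (X n ω)) - f (g' (X n ω))) ∂μ| := by rw [integral_sub hint1 hint2]
      _ ≤ ∫ ω, |f (φ n (X n ω)) - f (g' (X n ω))| ∂μ := by
          simpa [Real.norm_eq_abs] using norm_integral_le_integral_norm
            (fun ω => f (φ n (X n ω)) - f (g' (X n ω))) (μ := μ)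
      _ ≤ ∫ ω, (ε' + (2 * ‖f‖) * bumpBCF d R (X n ω)) ∂μ :=
          integral_mono ((hint1.sub hint2).abs) hintRHS hptw
      _ = ε' + (2 * ‖f‖) * ∫ ω, bumpBCF d R (X n ω) ∂μ := by
          rw [integral_add (integrable_const ε') (hintb.const_mul _),
            integral_const, integral_const_mul]
          simp [measure_univ]
      _ ≤ ε' + (2 * ‖f‖) * (2 * εZ) := by
          have hbnn : 0 ≤ ∫ ω, bumpBCF d R (X n ω) ∂μ :=
            integral_nonneg fun ω => bumpBCF_nonneg d R _
          have := mul_le_mul_of_nonneg_left h2.le (by positivity : (0:ℝ) ≤ 2 * ‖f‖)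
          linarith
  -- conclude
  have hfrac : (2 * ‖f‖) * (2 * εZ) ≤ ε / 2 := by
    have heq : (2 * ‖f‖) * (2 * εZ) = (‖f‖ / (‖f‖ + 1)) * (ε / 2) := by
      rw [hεZ_def]; field_simp; ring
    rw [heq]
    have hd1 : ‖f‖ / (‖f‖ + 1) ≤ 1 := by
      rw [div_le_one (by positivity)]; linarith
    have hd0 : 0 ≤ ‖f‖ / (‖f‖ + 1) := by positivity
    nlinarith
  have htri : dist (∫ ω, f (φ n (X n ω)) ∂μ) (∫ ω, f (g' (Z ω)) ∂μ)
      ≤ |(∫ ω, f (φ n (X n ω)) ∂μ) - ∫ ω, f (g' (X n ω)) ∂μ|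
        + dist (∫ ω, f (g' (X n ω)) ∂μ) (∫ ω, f (g' (Z ω)) ∂μ) := by
    rw [Real.dist_eq, Real.dist_eq]
    exact abs_sub_le _ _ _
  calc dist (∫ ω, f (φ n (X n ω)) ∂μ) (∫ ω, f (g' (Z ω)) ∂μ)
      ≤ _ + _ := htri
    _ < (ε' + (2 * ‖f‖) * (2 * εZ)) + ε' := by
        have := hAB
        have := h3
        linarith [hAB, h3]
    _ ≤ ε' + ε / 2 + ε' := by linarith [hfrac]
    _ < ε := by rw [hε'_def]; linarith
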